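/- Completeness of the instrumental control incentive criterion: if a single-decision CID contains a directed path D → Z¹ → ⋯ → Zⁿ = U with U a utility node and X = Zⁱ for some i, then there exists a compatible SCIM (with all variables Boolean, each path node copying its predecessor, decision domain {0,1}, and all off-path variables constantly 0) in which the unique optimal policy is constantly 1, E[U | Pa_D = 0] = 1, yet E[U_{X_0} | Pa_D = 0] = 0; hence an instrumental control incentive on X exists. -/

import Mathlib

attribute [local instance] Classical.propDecidable

noncomputable section

/-- Acyclicity of a directed graph. -/
def Acyclic {V : Type} (E : V → V → Prop) : Prop := ∀ v, ¬ Relation.TransGen E v v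

/-- A walk in the digraph: a nonempty list of vertices where consecutive
vertices are joined by an edge in some direction. -/
def IsWalk {V : Type} (E : V → V → Prop) (p : List V) : Prop :=
  p ≠ [] ∧ p.Chain' (fun a b => E a b ∨ E b a)

/-- A consecutive triple `a, b, c` blocks a path w.r.t. `S` if `b` is a collider
with no descendant (including itself) in `S`, or a non-collider in `S`. -/
def BlockedTriple {V : Type} (E : V → V → Prop) (S : Set V) (a b c : V) : Prop :=
  (E a b ∧ E c b ∧ ∀ w, Relation.ReflTransGen E b w → w ∉ S) ∨
  (¬ (E a b ∧ E c b) ∧ b ∈ S)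

/-- A path is d-separated (blocked) by `S`. -/
def BlocksPath {V : Type} (E : V → V → Prop) (S : Set V) (p : List V) : Prop :=
  (∃ x, p.head? = some x ∧ x ∈ S) ∨ (∃ x, p.getLast? = some x ∧ x ∈ S) ∨
  (∃ l a b c r, p = l ++ a :: b :: c :: r ∧ BlockedTriple E S a b c)

/-- `A` is d-separated from `B` given `S`. -/
def DSep {V : Type} (E : V → V → Prop) (A B S : Set V) : Prop :=
  ∀ p : List V, IsWalk E p → (∃ a ∈ A, p.head? = some a) →
    (∃ b ∈ B, p.getLast? = some b) → BlocksPath E S p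

/-- An observation `X ∈ Pa_D` is requisite in the graph `E` with decision `D` and
utility nodes `U` if it is d-connected to the downstream utilities `U ∩ Desc(D)`
given the other observations and the decision, `(Pa_D ∪ {D}) \ {X}`. -/
def RequisiteG {V : Type} (E : V → V → Prop) (D : V) (U : Set V) (X : V) : Prop :=
  E X D ∧ ¬ DSep E {X} {u | u ∈ U ∧ Relation.ReflTransGen E D u}
      {v | (E v D ∧ v ≠ X) ∨ v = D}

/-- The edge relation of the minimal reduction: all information links from
nonrequisite observations are removed. -/
def ReducedEdge {V : Type} (E : V → V → Prop) (D : V) (U : Set V) : V → V → Prop :=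
  fun a b => E a b ∧ (b = D → RequisiteG E D U a)

variable {V : Type} [Fintype V] [DecidableEq V]

/-- A single-decision structural causal influence model (SCIM): a causal
influence diagram (DAG with a decision node `D` and childless utility nodes
`Util` whose values are interpreted in `ℝ` via `utilReal`), finite nonempty
domains, structural functions for all non-decision nodes depending only on
parents, and mutually independent finitely-supported exogenous variables. -/
structure SCIM (V : Type) [Fintype V] [DecidableEq V] where
  Edge : V → V → Prop
  acyclic : Acyclic Edge
  D : V
  Util : Finset V
  utilNotD : D ∉ Util
  utilNoChild : ∀ u ∈ Util, ∀ v, ¬ Edge u v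
  Dom : V → Type
  domFin : ∀ v, Fintype (Dom v)
  domNE : ∀ v, Nonempty (Dom v)
  utilReal : (u : V) → Dom u → ℝ
  ExoDom : V → Type
  exoFin : ∀ v, Fintype (ExoDom v)
  exoNE : ∀ v, Nonempty (ExoDom v)
  f : (v : V) → ((p : V) → Dom p) → ExoDom v → Dom v
  localDep : ∀ v a a' e, (∀ p, Edge p v → a p = a' p) → f v a e = f v a' e
  P : (v : V) → ExoDom v → ℝ
  Pnonneg : ∀ v e, 0 ≤ P v e
  Psum : ∀ v, ∑ e ∈ (exoFin v).elems, P v e = 1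

namespace SCIM

variable (M : SCIM V)

/-- Joint (product) probability of an exogenous setting. -/
def Pjoint (ε : ∀ v, M.ExoDom v) : ℝ := ∏ v, M.P v (ε v)

/-- All exogenous settings. -/
def exoElems : Finset (∀ v, M.ExoDom v) :=
  letI := M.exoFin; Finset.univ

/-- A default assignment of values. -/
def dflt : ∀ v, M.Dom v := fun v => (M.domNE v).some

/-- `a` solves the system of structural equations `g` at exogenous setting `ε`. -/
def Solves (g : (v : V) → ((p : V) → M.Dom p) → M.ExoDom v → M.Dom v)
    (ε : ∀ v, M.ExoDom v) (a : ∀ v, M.Dom v) : Prop :=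
  ∀ v, a v = g v a (ε v)

/-- The (unique, by acyclicity) solution of the structural equations `g`
at `ε`: the values of all endogenous variables obtained by recursive
application of the structural functions. -/
def sol (g : (v : V) → ((p : V) → M.Dom p) → M.ExoDom v → M.Dom v)
    (ε : ∀ v, M.ExoDom v) : ∀ v, M.Dom v :=
  if h : ∃ a, M.Solves g ε a then h.choose else M.dflt

/-- Replace the structural function at node `X` by `gX` (a soft intervention). -/
def replaceAt (g : (v : V) → ((p : V) → M.Dom p) → M.ExoDom v → M.Dom v) (X : V)
    (gX : ((p : V) → M.Dom p) → M.ExoDom X → M.Dom X) :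
    (v : V) → ((p : V) → M.Dom p) → M.ExoDom v → M.Dom v :=
  fun v => if h : v = X then (by subst h; exact gX) else g v

/-- Hard intervention do(`X` = `x`): constant functions on `X`. -/
def doSet (g : (v : V) → ((p : V) → M.Dom p) → M.ExoDom v → M.Dom v)
    (X : Set V) (x : ∀ v, M.Dom v) :
    (v : V) → ((p : V) → M.Dom p) → M.ExoDom v → M.Dom v :=
  fun v => if v ∈ X then fun _ _ => x v else g v

/-- A policy: a structural function for `D` that depends only on the
observations `Pa_D` (and the exogenous variable of `D`). -/
def IsPolicy (π : ((p : V) → M.Dom p) → M.ExoDom M.D → M.Dom M.D) : Prop :=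
  ∀ a a' e, (∀ p, M.Edge p M.D → a p = a' p) → π a e = π a' e

/-- The policy-completed system of structural functions. -/
def gpol (π : ((p : V) → M.Dom p) → M.ExoDom M.D → M.Dom M.D) :
    (v : V) → ((p : V) → M.Dom p) → M.ExoDom v → M.Dom v :=
  M.replaceAt M.f M.D π

/-- Total utility of an assignment: the sum of the utility-node values. -/
def TotalU (a : ∀ v, M.Dom v) : ℝ := ∑ u ∈ M.Util, M.utilReal u (a u)

/-- Expected total utility of a system of structural equations `g`. -/
def EUg (g : (v : V) → ((p : V) → M.Dom p) → M.ExoDom v → M.Dom v) : ℝ :=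
  ∑ ε ∈ M.exoElems, M.Pjoint ε * M.TotalU (M.sol g ε)

/-- Expected total utility of a policy. -/
def EU (π : ((p : V) → M.Dom p) → M.ExoDom M.D → M.Dom M.D) : ℝ :=
  M.EUg (M.gpol π)

/-- An optimal policy maximizes expected total utility. -/
def IsOptimal (π : ((p : V) → M.Dom p) → M.ExoDom M.D → M.Dom M.D) : Prop :=
  M.IsPolicy π ∧ ∀ π', M.IsPolicy π' → M.EU π' ≤ M.EU π

/-- Probability of an event over exogenous settings. -/
def PrEv (Ev : (∀ v, M.ExoDom v) → Prop) : ℝ :=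
  ∑ ε ∈ M.exoElems, if Ev ε then M.Pjoint ε else 0

/-- Conditional expectation of `h` given the event `Ev`. -/
def condExp (h : (∀ v, M.ExoDom v) → ℝ) (Ev : (∀ v, M.ExoDom v) → Prop) : ℝ :=
  (∑ ε ∈ M.exoElems, if Ev ε then M.Pjoint ε * h ε else 0) / M.PrEv Ev

/-- Conditional probability of `h` given `Ev`. -/
def condProb (h Ev : (∀ v, M.ExoDom v) → Prop) : ℝ :=
  M.PrEv (fun ε => h ε ∧ Ev ε) / M.PrEv Ev

/-- The event that the decision context (the observations `Pa_D`) takes the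
values `pa`, under policy `π`. -/
def CtxEvent (π : ((p : V) → M.Dom p) → M.ExoDom M.D → M.Dom M.D)
    (pa : ∀ v, M.Dom v) (ε : ∀ v, M.ExoDom v) : Prop :=
  ∀ p, M.Edge p M.D → M.sol (M.gpol π) ε p = pa p

/-- The potential response under the hard intervention do(`X` = `x`),
in the policy-completed model: an assignment to all variables. -/
def response (π : ((p : V) → M.Dom p) → M.ExoDom M.D → M.Dom M.D)
    (X : V) (x : M.Dom X) (ε : ∀ v, M.ExoDom v) : ∀ v, M.Dom v :=
  M.sol (M.doSet (M.gpol π) {X} (Function.update M.dflt X x)) ε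

/-- The nested-counterfactual assignment realizing `U_{X_d}`: intervene on `X`
with the value `X_d(ε)` it would take under do(`D` = `d`). -/
def nestedSol (π : ((p : V) → M.Dom p) → M.ExoDom M.D → M.Dom M.D)
    (X : V) (d : M.Dom M.D) (ε : ∀ v, M.ExoDom v) : ∀ v, M.Dom v :=
  M.response π X (M.response π M.D d ε X) ε

/-- Instrumental control incentive on `X`: in some decision context `pa`
(of positive probability), every optimal policy has
`E[U_{X_d} | pa] ≠ E[U | pa]` for some `d`. -/
def HasICI (X : V) : Prop :=
  ∃ pa : ∀ v, M.Dom v, ∀ π, M.IsOptimal π →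
    0 < M.PrEv (M.CtxEvent π pa) ∧
    ∃ d : M.Dom M.D,
      M.condExp (fun ε => M.TotalU (M.nestedSol π X d ε)) (M.CtxEvent π pa) ≠
      M.condExp (fun ε => M.TotalU (M.sol (M.gpol π) ε)) (M.CtxEvent π pa)

/-- A policy that does not use the information link `X → D`. -/
def IsPolicyWithout (X : V)
    (π : ((p : V) → M.Dom p) → M.ExoDom M.D → M.Dom M.D) : Prop :=
  M.IsPolicy π ∧ ∀ a a' e, (∀ p, M.Edge p M.D → p ≠ X → a p = a' p) → π a e = π a' e

/-- Counterfactual fairness of policy `π` w.r.t. sensitive attribute `A`: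
`Pr(D_{a'} = d | pa_D, a) = Pr(D = d | pa_D, a)` for all `d`, contexts `pa_D`,
and attribute values `a, a'` with positive probability of the conditioning event. -/
def CFair (π : ((p : V) → M.Dom p) → M.ExoDom M.D → M.Dom M.D) (A : V) : Prop :=
  ∀ (d : M.Dom M.D) (pa : ∀ v, M.Dom v) (a a' : M.Dom A),
    0 < M.PrEv (fun ε => M.CtxEvent π pa ε ∧ M.sol (M.gpol π) ε A = a) →
    M.condProb (fun ε => M.response π A a' ε M.D = d)
        (fun ε => M.CtxEvent π pa ε ∧ M.sol (M.gpol π) ε A = a) =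
    M.condProb (fun ε => M.sol (M.gpol π) ε M.D = d)
        (fun ε => M.CtxEvent π pa ε ∧ M.sol (M.gpol π) ε A = a)

end SCIM

namespace ICIAux

variable {V : Type} [DecidableEq V] {E : V → V → Prop}

/-- predecessor of `v` in a list -/
def listPrev : List V → V → Option V
  | a :: b :: l, v => if v = b then some a else listPrev (b :: l) v
  | _, _ => none

lemma listPrev_mem_tail : ∀ (a : V) (l : List V) (v p : V),
    listPrev (a :: l) v = some p → v ∈ l
  | _, [], _, _, h => by simp [listPrev] at h
  | a, b :: l, v, p, h => by
      by_cases hv : v = b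
      · simp [hv]
      · simp only [listPrev, if_neg hv] at h
        exact List.mem_cons_of_mem _ (listPrev_mem_tail b l v p h)

lemma listPrev_edge : ∀ (l : List V) (v p : V), l.Chain' E →
    listPrev l v = some p → E p v
  | [], v, p, _, h => by simp [listPrev] at h
  | [_], v, p, _, h => by simp [listPrev] at h
  | a :: b :: l, v, p, hc, h => by
      simp only [List.Chain', List.isChain_cons_cons] at hc
      by_cases hv : v = b
      · simp only [listPrev, if_pos hv] at h
        cases h; subst hv; exact hc.1
      · simp only [listPrev, if_neg hv] at h
        exact listPrev_edge (b :: l) v p hc.2 h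

lemma listPrev_isSome : ∀ (a : V) (l : List V) (v : V), v ∈ l →
    ∃ p, listPrev (a :: l) v = some p
  | _, [], _, h => by simp at h
  | a, b :: l, v, h => by
      by_cases hv : v = b
      · exact ⟨a, by simp [listPrev, hv]⟩
      · have hv' : v ∈ l := by
          rcases List.mem_cons.1 h with h' | h'
          · exact absurd h' hv
          · exact h'
        obtain ⟨p, hp⟩ := listPrev_isSome b l v hv'
        exact ⟨p, by simpa [listPrev, if_neg hv] using hp⟩

lemma listPrev_adj : ∀ (l1 : List V) (l2 : List V) (x y : V),
    (l1 ++ x :: y :: l2).Nodup → listPrev (l1 ++ x :: y :: l2) y = some x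
  | [], l2, x, y, _ => by simp [listPrev]
  | a :: l1, l2, x, y, hnd => by
      have hnd' : (l1 ++ x :: y :: l2).Nodup := by
        simpa using (List.nodup_cons.1 (by simpa using hnd)).2
      have IH := listPrev_adj l1 l2 x y hnd'
      cases l1 with
      | nil =>
          have hxy : y ≠ x := by
            intro h; subst h; simp at hnd'
          simp only [List.nil_append] at IH
          simpa [listPrev, hxy] using IH
      | cons c l1' =>
          have hyc : y ≠ c := by
            have hm : y ∈ l1' ++ x :: y :: l2 := by simp
            intro h; subst h
            simp only [List.cons_append, List.nodup_cons] at hnd'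
            exact hnd'.1 hm
          simp only [List.cons_append, listPrev, if_neg hyc] at IH ⊢
          exact IH

lemma mem_of_listPrev {l : List V} {v p : V} (h : listPrev l v = some p) : v ∈ l := by
  cases l with
  | nil => simp [listPrev] at h
  | cons a t => exact List.mem_cons_of_mem _ (listPrev_mem_tail a t v p h)

/-- chain head reaches every member -/
lemma chain_reaches : ∀ (x : V) (t : List V), List.Chain' E (x :: t) → ∀ v ∈ x :: t,
    Relation.ReflTransGen E x v
  | x, [], _, v, hv => by
      rcases List.mem_singleton.1 hv with rfl
      exact Relation.ReflTransGen.refl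
  | x, y :: t, hc, v, hv => by
      simp only [List.Chain', List.isChain_cons_cons] at hc
      rcases List.mem_cons.1 hv with rfl | hv'
      · exact Relation.ReflTransGen.refl
      · exact Relation.ReflTransGen.head hc.1 (chain_reaches y t hc.2 v hv')

lemma chain_sublist_transGen : ∀ (l : List V) (a b : V), List.Chain' E l →
    List.Sublist [a, b] l → Relation.TransGen E a b
  | [], a, b, _, h => by simp at h
  | x :: t, a, b, hc, h => by
      cases h with
      | cons _ h' => exact chain_sublist_transGen t a b hc.tail h'
      | cons_cons _ h' =>
          have hb : b ∈ t := by simpa using h'.subset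
          clear h'
          induction t generalizing x with
          | nil => simp at hb
          | cons y t' ih =>
              simp only [List.Chain', List.isChain_cons_cons] at hc
              rcases List.mem_cons.1 hb with rfl | hb'
              · exact Relation.TransGen.single hc.1
              · exact (Relation.TransGen.single hc.1).trans (ih y hc.2 hb')

lemma chain_nodup (hac : ∀ v, ¬ Relation.TransGen E v v) (l : List V) (hc : List.Chain' E l) : l.Nodup := by
  rw [List.nodup_iff_sublist]
  intro a h
  exact hac a (chain_sublist_transGen l a a hc h)

/-- a childless member of a chain is the last element -/
lemma childless_getLast : ∀ (l : List V), List.Chain' E l → ∀ v ∈ l,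
    (∀ c, ¬ E v c) → l.getLast? = some v
  | [], _, v, hv, _ => by simp at hv
  | [x], _, v, hv, _ => by
      rcases List.mem_singleton.1 hv with rfl; rfl
  | x :: y :: t, hc, v, hv, hnc => by
      simp only [List.Chain', List.isChain_cons_cons] at hc
      rcases List.mem_cons.1 hv with rfl | hv'
      · exact absurd hc.1 (hnc y)
      · rw [List.getLast?_cons_cons]
        exact childless_getLast (y :: t) hc.2 v hv' hnc


end ICIAux
namespace ICIAux

section listlemmas
variable {V : Type} [DecidableEq V] {E : V → V → Prop}

lemma rtg_chain_list {a b : V} (h : Relation.ReflTransGen E a b) :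
    ∃ l : List V, l.Chain' E ∧ l.head? = some a ∧ l.getLast? = some b := by
  induction h with
  | refl => exact ⟨[a], by simp [List.Chain'], rfl, rfl⟩
  | @tail b c hab hbc ih =>
      obtain ⟨l, hc, hh, hl⟩ := ih
      have hne : l ≠ [] := by rintro rfl; simp at hh
      refine ⟨l ++ [c], ?_, ?_, ?_⟩
      · simp only [List.Chain', List.isChain_append]
        refine ⟨hc, by simp, ?_⟩
        intro x hx y hy
        simp only [List.head?_cons, Option.mem_def, Option.some.injEq] at hy
        rw [hl] at hx
        simp only [Option.mem_def, Option.some.injEq] at hx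
        subst hx; subst hy; exact hbc
      · rw [List.head?_append_of_ne_nil _ hne]; exact hh
      · exact List.getLast?_concat

lemma prop_along {L : List V} (hnd : L.Nodup) (a : V → Bool) (c : Bool) :
    ∀ (l : List V) (l1 : List V), l1 ++ l = L →
    (∀ v p, v ∈ l.tail → listPrev L v = some p → a v = a p) →
    (∀ x, l.head? = some x → a x = c) → ∀ v ∈ l, a v = c
  | [], _, _, _, _ => by simp
  | x :: t, l1, hL, ha, hh => by
      have hx : a x = c := hh x rfl
      intro v hv
      rcases List.mem_cons.1 hv with rfl | hv'
      · exact hx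
      · refine prop_along hnd a c t (l1 ++ [x]) (by rw [← hL]; simp) ?_ ?_ v hv'
        · intro w p hw hp
          exact ha w p (List.mem_of_mem_tail hw) hp
        · intro y hy
          cases t with
          | nil => simp at hy
          | cons y' t' =>
              simp only [List.head?_cons, Option.some.injEq] at hy
              subst hy
              have hadj : listPrev L y' = some x := by
                rw [← hL]; exact listPrev_adj l1 t' x y' (by rw [hL]; exact hnd)
              rw [ha y' x (by simp) hadj]
              exact hx

end listlemmas

/-- copy-or-default step function -/
def step {V : Type} : Option V → Bool → (V → Bool) → Bool
  | some p, _, a => a p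
  | none, d, _ => d

@[simp] lemma step_none {V : Type} (d : Bool) (a : V → Bool) : step none d a = d := rfl

@[simp] lemma step_some {V : Type} (p : V) (d : Bool) (a : V → Bool) :
    step (some p) d a = a p := rfl

section scimlemmas

variable {V : Type} [Fintype V] [DecidableEq V] (M : SCIM V)

/-- the system `g` respects the parent structure -/
def GoodG (g : (v : V) → ((p : V) → M.Dom p) → M.ExoDom v → M.Dom v) : Prop :=
  ∀ v a a' e, (∀ p, M.Edge p v → a p = a' p) → g v a e = g v a' e

lemma solves_exists (g) (hg : GoodG M g) (ε : ∀ v, M.ExoDom v) : ∃ a, M.Solves g ε a := by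
  haveI : IsTrans V (Relation.TransGen M.Edge) := ⟨fun _ _ _ => Relation.TransGen.trans⟩
  haveI : IsIrrefl V (Relation.TransGen M.Edge) := ⟨M.acyclic⟩
  have wf := Finite.wellFounded_of_trans_of_irrefl (Relation.TransGen M.Edge)
  refine ⟨wf.fix (C := fun v => M.Dom v)
    (fun v ih => g v (fun p => if h : Relation.TransGen M.Edge p v then ih p h else M.dflt p) (ε v)),
    fun v => ?_⟩
  rw [wf.fix_eq]
  exact hg v _ _ (ε v) (fun p hp => by rw [dif_pos (Relation.TransGen.single hp)])

lemma sol_fix (g) (hg : GoodG M g) (ε : ∀ v, M.ExoDom v) (v : V) :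
    M.sol g ε v = g v (M.sol g ε) (ε v) := by
  have h : ∃ a, M.Solves g ε a := solves_exists M g hg ε
  rw [SCIM.sol, dif_pos h]
  exact h.choose_spec v

lemma replaceAt_same (g) (Y : V) (gY) : M.replaceAt g Y gY Y = gY := by
  simp [SCIM.replaceAt]

lemma replaceAt_other (g) (Y : V) (gY) {v : V} (h : v ≠ Y) : M.replaceAt g Y gY v = g v :=
  dif_neg h

lemma good_gpol (π) (hπ : M.IsPolicy π) (hf : GoodG M M.f) : GoodG M (M.gpol π) := by
  intro v a a' e hpar
  by_cases h : v = M.D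
  · subst h
    rw [SCIM.gpol, replaceAt_same]
    exact hπ a a' e hpar
  · rw [SCIM.gpol, replaceAt_other M _ _ _ h]
    exact hf v a a' e hpar

lemma good_doSet (g) (hg : GoodG M g) (S : Set V) (x) : GoodG M (M.doSet g S x) := by
  intro v a a' e hpar
  rw [SCIM.doSet]
  by_cases h : v ∈ S
  · simp [h]
  · simp only [h, if_false]
    exact hg v a a' e hpar

lemma doSet_mem (g) (S : Set V) (x) {v : V} (h : v ∈ S) :
    M.doSet g S x v = fun _ _ => x v := if_pos h

lemma doSet_not_mem (g) (S : Set V) (x) {v : V} (h : v ∉ S) :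
    M.doSet g S x v = g v := if_neg h

lemma condExp_one (h : (∀ v, M.ExoDom v) → ℝ) (Ev) (hpos : M.PrEv Ev ≠ 0)
    (hh : ∀ ε, h ε = 1) : M.condExp h Ev = 1 := by
  rw [SCIM.condExp]
  have : (∑ ε ∈ M.exoElems, if Ev ε then M.Pjoint ε * h ε else 0) = M.PrEv Ev := by
    rw [SCIM.PrEv]
    refine Finset.sum_congr rfl fun ε _ => ?_
    rw [hh ε, mul_one]
  rw [this, div_self hpos]

lemma condExp_zero (h : (∀ v, M.ExoDom v) → ℝ) (Ev)
    (hh : ∀ ε, h ε = 0) : M.condExp h Ev = 0 := by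
  rw [SCIM.condExp]
  have : (∑ ε ∈ M.exoElems, if Ev ε then M.Pjoint ε * h ε else 0) = 0 := by
    refine Finset.sum_eq_zero fun ε _ => ?_
    rw [hh ε, mul_zero]
    simp
  rw [this, zero_div]

end scimlemmas

end ICIAux

/-- ICI criterion completeness: if the CID contains a directed
path `D ⇝ X ⇝ U` to a utility node `U`, then there is a compatible SCIM with all
domains Boolean in which every optimal policy is the constant policy `d₁`, and in
the decision context `pa`, `E[U | pa] = 1` while `E[U_{X_{d₀}} | pa] = 0`; hence
there is an instrumental control incentive on `X`. -/
theorem ici_completeness {V : Type} [Fintype V] [DecidableEq V]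
    (E : V → V → Prop) (hac : Acyclic E) (D : V) (Util : Finset V)
    (hD : D ∉ Util) (hchild : ∀ u ∈ Util, ∀ v, ¬ E u v) (X : V)
    (hpath : Relation.ReflTransGen E D X ∧ ∃ u ∈ Util, Relation.ReflTransGen E X u) :
    ∃ M : SCIM V, M.Edge = E ∧ M.D = D ∧ M.Util = Util ∧
      (∀ v, M.Dom v = Bool) ∧
      ∃ (pa : ∀ v, M.Dom v) (d₀ d₁ : M.Dom M.D),
        d₀ ≠ d₁ ∧
        (∀ π, M.IsOptimal π → ∀ a e, π a e = d₁) ∧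
        0 < M.PrEv (M.CtxEvent (fun _ _ => d₁) pa) ∧
        (∀ π, M.IsOptimal π →
          M.condExp (fun ε => M.TotalU (M.sol (M.gpol π) ε)) (M.CtxEvent π pa) = 1 ∧
          M.condExp (fun ε => M.TotalU (M.nestedSol π X d₀ ε)) (M.CtxEvent π pa) = 0) ∧
        M.HasICI X := by
  classical
  obtain ⟨hDX, u, hu, hXu⟩ := hpath
  obtain ⟨l1, hc1, hh1, hl1⟩ := ICIAux.rtg_chain_list hDX
  obtain ⟨l2, hc2, hh2, hl2⟩ := ICIAux.rtg_chain_list hXu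
  have hl1ne : l1 ≠ [] := by rintro rfl; simp at hh1
  obtain ⟨t2, rfl⟩ : ∃ t2, l2 = X :: t2 := by
    cases l2 with
    | nil => simp at hh2
    | cons a t =>
        simp only [List.head?_cons, Option.some.injEq] at hh2
        exact ⟨t, by rw [hh2]⟩
  have hl1d : l1.dropLast ++ [X] = l1 :=
    List.dropLast_append_getLast? X (Option.mem_def.2 hl1)
  set L : List V := l1.dropLast ++ (X :: t2) with hLdef
  have hLl : L = l1 ++ t2 := by
    conv_rhs => rw [← hl1d]
    rw [hLdef, List.append_assoc, List.singleton_append]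
  have hLchain : L.Chain' E := by
    rw [← hl1d] at hc1
    obtain ⟨cd, _, hlast⟩ := List.isChain_append.1 hc1
    refine List.isChain_append.2 ⟨cd, hc2, ?_⟩
    intro x hx y hy
    simp only [List.head?_cons, Option.mem_def, Option.some.injEq] at hy
    subst hy
    exact hlast x hx X rfl
  have hLhead : L.head? = some D := by
    rw [hLl, List.head?_append_of_ne_nil _ hl1ne]; exact hh1
  have hLlast : L.getLast? = some u := by
    rw [hLdef, List.getLast?_append_of_ne_nil _ (by simp)]; exact hl2
  have hnd : L.Nodup := ICIAux.chain_nodup hac L hLchain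
  obtain ⟨T, hLT⟩ : ∃ T, L = D :: T := by
    cases hL : L with
    | nil => rw [hL] at hLhead; simp at hLhead
    | cons a t =>
        rw [hL, List.head?_cons] at hLhead
        exact ⟨t, by rw [Option.some.injEq] at hLhead; rw [hLhead]⟩
  have hDnotT : D ∉ T := by
    have h := hnd; rw [hLT] at h; exact (List.nodup_cons.1 h).1
  have hXL : X ∈ L := by rw [hLdef]; simp
  have hDL : D ∈ L := by rw [hLT]; simp
  have hul2 : u ∈ X :: t2 := List.mem_of_mem_getLast? (Option.mem_def.2 hl2)
  have huL : u ∈ L := by rw [hLdef]; exact List.mem_append_right _ hul2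
  have hreach : ∀ v ∈ L, Relation.ReflTransGen E D v := by
    intro v hv
    rw [hLT] at hv
    exact ICIAux.chain_reaches D T (hLT ▸ hLchain) v hv
  have hnotD : ∀ {v p : V}, ICIAux.listPrev L v = some p → v ≠ D := by
    intro v p hp h
    exact hDnotT (h ▸ ICIAux.listPrev_mem_tail D T v p (hLT ▸ hp))
  have hparnotL : ∀ p, E p D → p ∉ L := by
    intro p hp hpl
    exact hac D (Relation.TransGen.tail' (hreach p hpl) hp)
  have hparnotU : ∀ p, E p D → p ∉ Util := fun p hp hpu => hchild p hpu D hp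
  have hparnotD : ∀ p, E p D → p ≠ D := fun p hp h =>
    hac D (Relation.TransGen.single (h ▸ hp))
  have hUtilL : ∀ w ∈ Util, w ∈ L → w = u := by
    intro w hw hwL
    have h := ICIAux.childless_getLast L hLchain w hwL (hchild w hw)
    rw [hLlast] at h
    exact (Option.some.inj h).symm
  have hnoL : ∀ {w : V}, w ∉ L → ICIAux.listPrev L w = none := by
    intro w hw
    rcases h : ICIAux.listPrev L w with _ | q
    · rfl
    · exact absurd (ICIAux.mem_of_listPrev h) hw
  -- the model
  let M : SCIM V :=
    { Edge := E, acyclic := hac, D := D, Util := Util, utilNotD := hD,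
      utilNoChild := hchild,
      Dom := fun _ => Bool, domFin := fun _ => inferInstance,
      domNE := fun _ => ⟨true⟩,
      utilReal := fun _ b => if b then (1 : ℝ) else 0,
      ExoDom := fun _ => Bool, exoFin := fun _ => inferInstance,
      exoNE := fun _ => ⟨true⟩,
      f := fun v a e =>
        ICIAux.step (ICIAux.listPrev L v) (if v ∈ L ∨ v ∈ Util then false else e) a,
      localDep := by
        intro v a a' e h
        show ICIAux.step (ICIAux.listPrev L v) _ a
          = ICIAux.step (ICIAux.listPrev L v) _ a'
        rcases hp : ICIAux.listPrev L v with _ | p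
        · rfl
        · exact h p (ICIAux.listPrev_edge L v p hLchain hp),
      P := fun _ _ => 1 / 2,
      Pnonneg := fun _ _ => by norm_num,
      Psum := fun v => by
        show ∑ _e ∈ (Finset.univ : Finset Bool), (1 / 2 : ℝ) = 1
        simp }
  have hMf : ∀ (v : V) (a : (p : V) → M.Dom p) (e : M.ExoDom v),
      M.f v a e = ICIAux.step (ICIAux.listPrev L v)
        (if v ∈ L ∨ v ∈ Util then false else e) a := fun _ _ _ => rfl
  have hgoodf : ICIAux.GoodG M M.f := M.localDep
  refine ⟨M, rfl, rfl, rfl, fun _ => rfl, ?_⟩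
  -- solution structure under a policy
  have solP : ∀ (π : ((p : V) → M.Dom p) → M.ExoDom M.D → M.Dom M.D),
      M.IsPolicy π → ∀ ε : ∀ v, M.ExoDom v,
      (∀ v ∈ L, M.sol (M.gpol π) ε v = π ε (ε D)) ∧
      (∀ p, E p D → M.sol (M.gpol π) ε p = ε p) ∧
      (∀ w ∈ Util, w ≠ u → M.sol (M.gpol π) ε w = false) := by
    intro π hπ ε
    have hg : ICIAux.GoodG M (M.gpol π) := ICIAux.good_gpol M π hπ hgoodf
    set a := M.sol (M.gpol π) ε with ha
    have hfix : ∀ v, a v = M.gpol π v a (ε v) := fun v => ICIAux.sol_fix M _ hg ε v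
    have hfixf : ∀ v, v ≠ D → a v = M.f v a (ε v) := by
      intro v hv
      rw [hfix v, SCIM.gpol, ICIAux.replaceAt_other M _ _ _ hv]
    have haD : a D = π a (ε D) := by
      rw [hfix D, SCIM.gpol, ICIAux.replaceAt_same]
    have hpar : ∀ p, E p D → a p = ε p := by
      intro p hp
      rw [hfixf p (hparnotD p hp), hMf, hnoL (hparnotL p hp)]
      simp [hparnotL p hp, hparnotU p hp]
    have hcopy : ∀ v p, ICIAux.listPrev L v = some p → a v = a p := by
      intro v p hp
      rw [hfixf v (hnotD hp), hMf, hp]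
      rfl
    have hπa : π a (ε D) = π ε (ε D) := hπ a ε (ε D) (fun p hp => hpar p hp)
    have hchainval : ∀ v ∈ L, a v = π ε (ε D) := by
      refine ICIAux.prop_along hnd a (π ε (ε D)) L [] rfl
        (fun v p _ hp => hcopy v p hp) ?_
      intro x hx
      rw [hLhead, Option.some.injEq] at hx
      subst hx
      rw [haD, hπa]
    have hoff : ∀ w ∈ Util, w ≠ u → a w = false := by
      intro w hw hwu
      have hwL : w ∉ L := fun hwL => hwu (hUtilL w hw hwL)
      have hwD : w ≠ D := fun h => hD (h ▸ hw)
      rw [hfixf w hwD, hMf, hnoL hwL]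
      simp [hw]
    exact ⟨hchainval, hpar, hoff⟩
  -- total utility
  have hTot : ∀ (π : ((p : V) → M.Dom p) → M.ExoDom M.D → M.Dom M.D),
      M.IsPolicy π → ∀ ε : ∀ v, M.ExoDom v,
      M.TotalU (M.sol (M.gpol π) ε) = if π ε (ε D) then 1 else 0 := by
    intro π hπ ε
    obtain ⟨h1, _, h3⟩ := solP π hπ ε
    rw [SCIM.TotalU]
    rw [Finset.sum_eq_single_of_mem u hu
      (fun w hw hwu => by rw [show M.sol (M.gpol π) ε w = false from h3 w hw hwu]; rfl)]
    rw [h1 u huL]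
  have hPj : ∀ ε : ∀ v, M.ExoDom v, 0 < M.Pjoint ε := by
    intro ε
    rw [SCIM.Pjoint]
    exact Finset.prod_pos fun v _ => by norm_num
  have hEU : ∀ (π : ((p : V) → M.Dom p) → M.ExoDom M.D → M.Dom M.D),
      M.IsPolicy π →
      M.EU π = ∑ ε ∈ M.exoElems, M.Pjoint ε * (if π ε (ε D) then 1 else 0) := by
    intro π hπ
    rw [SCIM.EU, SCIM.EUg]
    exact Finset.sum_congr rfl fun ε _ => by rw [hTot π hπ ε]
  have hπ₁pol : M.IsPolicy (fun _ _ => true) := fun _ _ _ _ => rfl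
  have hEU1 : M.EU (fun _ _ => true) = ∑ ε ∈ M.exoElems, M.Pjoint ε := by
    rw [hEU _ hπ₁pol]
    exact Finset.sum_congr rfl fun ε _ => by simp
  have hopt1 : M.IsOptimal (fun _ _ => true) := by
    refine ⟨hπ₁pol, fun π' hπ' => ?_⟩
    rw [hEU π' hπ', hEU1]
    refine Finset.sum_le_sum fun ε _ => ?_
    have h2 : (if π' ε (ε D) then (1:ℝ) else 0) ≤ 1 := by split <;> norm_num
    calc M.Pjoint ε * (if π' ε (ε D) then (1:ℝ) else 0)
        ≤ M.Pjoint ε * 1 := mul_le_mul_of_nonneg_left h2 (le_of_lt (hPj ε))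
      _ = M.Pjoint ε := mul_one _
  have hforce : ∀ π, M.IsOptimal π → ∀ a e, π a e = true := by
    intro π hπ
    have hall : ∀ ε : ∀ v, M.ExoDom v, π ε (ε D) = true := by
      by_contra hc
      push_neg at hc
      obtain ⟨ε₀, hε₀⟩ := hc
      have hε₀' : π ε₀ (ε₀ D) = false := by
        cases h : π ε₀ (ε₀ D)
        · rfl
        · exact absurd h hε₀
      have hlt : M.EU π < M.EU (fun _ _ => true) := by
        rw [hEU π hπ.1, hEU1]
        refine Finset.sum_lt_sum (fun ε _ => ?_) ⟨ε₀, Finset.mem_univ _, ?_⟩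
        · have h2 : (if π ε (ε D) then (1:ℝ) else 0) ≤ 1 := by split <;> norm_num
          calc M.Pjoint ε * (if π ε (ε D) then (1:ℝ) else 0)
              ≤ M.Pjoint ε * 1 := mul_le_mul_of_nonneg_left h2 (le_of_lt (hPj ε))
            _ = M.Pjoint ε := mul_one _
        · rw [hε₀']
          simpa using hPj ε₀
      exact absurd (hπ.2 _ hπ₁pol) (not_le.2 hlt)
    intro a e
    have h1 : π a e = π (Function.update a D e) e :=
      hπ.1 a _ e (fun p hp => (Function.update_of_ne (hparnotD p hp) e a).symm)
    have h2 : π (Function.update a D e) e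
        = π (Function.update a D e) ((Function.update a D e) D) := by
      rw [Function.update_self]
    rw [h1, h2]
    exact hall (Function.update a D e)
  -- the context
  have hCtxpos : ∀ (π : ((p : V) → M.Dom p) → M.ExoDom M.D → M.Dom M.D),
      M.IsPolicy π → 0 < M.PrEv (M.CtxEvent π (fun _ => true)) := by
    intro π hπ
    rw [SCIM.PrEv]
    refine Finset.sum_pos' (fun ε _ => ?_) ⟨(fun _ => true), Finset.mem_univ _, ?_⟩
    · split
      · exact le_of_lt (hPj ε)
      · exact le_refl 0
    · have hev : M.CtxEvent π (fun _ => true) (fun _ => true) := by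
        intro p hp
        exact (solP π hπ (fun _ => true)).2.1 p hp
      rw [if_pos hev]
      exact hPj _
  -- nested counterfactual utility is 0
  have hnest : ∀ (π : ((p : V) → M.Dom p) → M.ExoDom M.D → M.Dom M.D),
      M.IsPolicy π → ∀ ε : ∀ v, M.ExoDom v,
      M.TotalU (M.nestedSol π X false ε) = 0 := by
    intro π hπ ε
    have hgp : ICIAux.GoodG M (M.gpol π) := ICIAux.good_gpol M π hπ hgoodf
    -- step A : response to do(D := false)
    have hg1 : ICIAux.GoodG M
        (M.doSet (M.gpol π) {M.D} (Function.update M.dflt M.D false)) :=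
      ICIAux.good_doSet M _ hgp _ _
    set b := M.sol (M.doSet (M.gpol π) {M.D} (Function.update M.dflt M.D false)) ε
      with hb
    have hfix1 : ∀ v, b v = M.doSet (M.gpol π) {M.D}
        (Function.update M.dflt M.D false) v b (ε v) :=
      fun v => ICIAux.sol_fix M _ hg1 ε v
    have hbD : b D = false := by
      rw [hfix1 D, ICIAux.doSet_mem M _ _ _ (Set.mem_singleton D)]
      exact Function.update_self D false M.dflt
    have hcopy1 : ∀ v p, ICIAux.listPrev L v = some p → b v = b p := by
      intro v p hp
      rw [hfix1 v, ICIAux.doSet_not_mem M _ _ _ (by simpa using hnotD hp),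
        SCIM.gpol, ICIAux.replaceAt_other M _ _ _ (hnotD hp), hMf, hp]
      rfl
    have hbL : ∀ v ∈ L, b v = false := by
      refine ICIAux.prop_along hnd b false L [] rfl
        (fun v p _ hp => hcopy1 v p hp) ?_
      intro x hx
      rw [hLhead, Option.some.injEq] at hx
      subst hx
      exact hbD
    -- step B : the nested intervention do(X := false)
    have hns : M.nestedSol π X false ε =
        M.sol (M.doSet (M.gpol π) {X} (Function.update M.dflt X false)) ε := by
      rw [SCIM.nestedSol]
      rw [show M.response π M.D false ε X = false from hbL X hXL]
      rfl
    have hg2 : ICIAux.GoodG M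
        (M.doSet (M.gpol π) {X} (Function.update M.dflt X false)) :=
      ICIAux.good_doSet M _ hgp _ _
    set c := M.sol (M.doSet (M.gpol π) {X} (Function.update M.dflt X false)) ε
      with hcdef
    have hfix2 : ∀ v, c v = M.doSet (M.gpol π) {X}
        (Function.update M.dflt X false) v c (ε v) :=
      fun v => ICIAux.sol_fix M _ hg2 ε v
    have hcX : c X = false := by
      rw [hfix2 X, ICIAux.doSet_mem M _ _ _ (Set.mem_singleton X)]
      exact Function.update_self X false M.dflt
    have hcopy2 : ∀ v p, v ≠ X → ICIAux.listPrev L v = some p → c v = c p := by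
      intro v p hvX hp
      rw [hfix2 v, ICIAux.doSet_not_mem M _ _ _ (by simpa using hvX),
        SCIM.gpol, ICIAux.replaceAt_other M _ _ _ (hnotD hp), hMf, hp]
      rfl
    have hXnott2 : X ∉ t2 := (List.nodup_cons.1 (ICIAux.chain_nodup hac _ hc2)).1
    have hcL2 : ∀ v ∈ X :: t2, c v = false := by
      refine ICIAux.prop_along hnd c false (X :: t2) l1.dropLast hLdef.symm ?_ ?_
      · intro v p hv hp
        have hvX : v ≠ X := fun h => hXnott2 (h ▸ hv)
        exact hcopy2 v p hvX hp
      · intro x hx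
        rw [List.head?_cons, Option.some.injEq] at hx
        subst hx
        exact hcX
    have hcoff : ∀ w ∈ Util, w ≠ u → c w = false := by
      intro w hw hwu
      have hwL : w ∉ L := fun hwL => hwu (hUtilL w hw hwL)
      have hwD : w ≠ D := fun h => hD (h ▸ hw)
      have hwX : w ≠ X := fun h => hwL (h ▸ hXL)
      rw [hfix2 w, ICIAux.doSet_not_mem M _ _ _ (by simpa using hwX),
        SCIM.gpol, ICIAux.replaceAt_other M _ _ _ hwD, hMf, hnoL hwL]
      simp [hw]
    rw [hns, SCIM.TotalU]
    refine Finset.sum_eq_zero fun w hw => ?_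
    by_cases hwu : w = u
    · subst hwu
      rw [show c w = false from hcL2 w hul2]
      rfl
    · rw [show c w = false from hcoff w hw hwu]
      rfl
  -- conclusion
  refine ⟨(fun _ => true), false, true, by simp, hforce, hCtxpos _ hπ₁pol, ?_, ?_⟩
  · intro π hπ
    have hfa := hforce π hπ
    constructor
    · refine ICIAux.condExp_one M _ _ (ne_of_gt (hCtxpos π hπ.1)) ?_
      intro ε
      rw [hTot π hπ.1 ε, hfa]
      simp
    · exact ICIAux.condExp_zero M _ _ (fun ε => hnest π hπ.1 ε)
  · refine ⟨(fun _ => true), fun π hπ => ⟨hCtxpos π hπ.1, false, ?_⟩⟩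
    rw [ICIAux.condExp_zero M _ _ (fun ε => hnest π hπ.1 ε),
      ICIAux.condExp_one M _ _ (ne_of_gt (hCtxpos π hπ.1))
        (fun ε => by rw [hTot π hπ.1 ε, hforce π hπ]; simp)]
    norm_num
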